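/- Let F be a family of graphs on vertex set [n] (n ≥ 1) such that for all G, H in F the intersection G ∩ H (as edge sets, viewed as a spanning subgraph on [n]) is connected. Then |F| ≤ 2^(C(n,2) - (n-1)), i.e., F contains at most a 1/2^(n-1) fraction of all graphs on [n]. -/
import Mathlib

/-- Normalized edge-indicator of `G` on edges not touching vertex `0`:
`ψ G {a,b} = Adj a b XOR Adj 0 a XOR Adj 0 b` (as a Prop via iff). -/
def psiAux (n : ℕ) (G : SimpleGraph (Fin (n + 1))) : (Σ i : Fin n, Fin i.val) → Prop :=
  fun x =>
    G.Adj ⟨x.2.val + 1, by have := x.1.isLt; have := x.2.isLt; omega⟩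
        ⟨x.1.val + 1, by have := x.1.isLt; omega⟩ ↔
      (G.Adj 0 ⟨x.2.val + 1, by have := x.1.isLt; have := x.2.isLt; omega⟩ ↔
        G.Adj 0 ⟨x.1.val + 1, by have := x.1.isLt; omega⟩)

theorem psiAux_inj (n : ℕ) (G H : SimpleGraph (Fin (n + 1)))
    (hcon : (G ⊓ H).Connected) (hψ : psiAux n G = psiAux n H) : G = H := by
  have key : ∀ a b : Fin (n + 1), 0 < a.val → a.val < b.val →
      ((G.Adj a b ↔ (G.Adj 0 a ↔ G.Adj 0 b)) ↔
        (H.Adj a b ↔ (H.Adj 0 a ↔ H.Adj 0 b))) := by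
    intro a b ha hab
    have hb := b.isLt
    have h1 : b.val - 1 < n := by omega
    have h2 : a.val - 1 < b.val - 1 := by omega
    have hx := congrFun hψ ⟨⟨b.val - 1, h1⟩, ⟨a.val - 1, h2⟩⟩
    simp only [psiAux] at hx
    have e1 : a.val - 1 + 1 = a.val := by omega
    have e2 : b.val - 1 + 1 = b.val := by omega
    simp only [e1, e2, Fin.eta] at hx
    exact iff_of_eq hx
  have star : ∀ v, (G.Adj 0 v ↔ H.Adj 0 v) := by
    by_contra hbad
    push_neg at hbad
    obtain ⟨v, hv⟩ := hbad
    set S : Fin (n + 1) → Prop := fun u => ¬(G.Adj 0 u ↔ H.Adj 0 u) with hS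
    have pres : ∀ u w, (G ⊓ H).Adj u w → (S u ↔ S w) := by
      intro u w huw
      obtain ⟨hGuw, hHuw⟩ := huw
      by_cases hu : u = 0
      · subst hu
        simp [hS, hGuw, hHuw, SimpleGraph.irrefl]
      · by_cases hw : w = 0
        · subst hw
          have hG' : G.Adj 0 u := G.adj_symm hGuw
          have hH' : H.Adj 0 u := H.adj_symm hHuw
          simp [hS, hG', hH', SimpleGraph.irrefl]
        · have hune : u.val ≠ 0 := fun hc => hu (Fin.ext (by simpa using hc))
          have hwne : w.val ≠ 0 := fun hc => hw (Fin.ext (by simpa using hc))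
          have hne : u.val ≠ w.val := fun hc => (G.ne_of_adj hGuw) (Fin.ext hc)
          rcases lt_or_gt_of_ne hne with hlt | hgt
          · have hk := key u w (by omega) (by omega)
            rw [iff_true_intro hGuw, iff_true_intro hHuw, true_iff, true_iff] at hk
            simp only [hS]
            tauto
          · have hk := key w u (by omega) (by omega)
            have hG' : G.Adj w u := G.adj_symm hGuw
            have hH' : H.Adj w u := H.adj_symm hHuw
            rw [iff_true_intro hG', iff_true_intro hH', true_iff, true_iff] at hk
            simp only [hS]
            tauto
    have walkpres : ∀ (u w : Fin (n + 1)) (p : (G ⊓ H).Walk u w), S u ↔ S w := by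
      intro u w p
      induction p with
      | nil => exact Iff.rfl
      | cons hadj p ih => exact (pres _ _ hadj).trans ih
    obtain ⟨p⟩ := hcon.preconnected 0 v
    have hS0 : ¬ S 0 := by simp [hS, SimpleGraph.irrefl]
    have hv' : S v := by simp only [hS]; tauto
    exact hS0 ((walkpres 0 v p).mpr hv')
  ext a b
  by_cases ha : a = 0
  · subst ha; exact star b
  · by_cases hb : b = 0
    · subst hb
      rw [G.adj_comm, H.adj_comm]
      exact star a
    · have hane : a.val ≠ 0 := fun hc => ha (Fin.ext (by simpa using hc))
      have hbne : b.val ≠ 0 := fun hc => hb (Fin.ext (by simpa using hc))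
      by_cases hab : a.val = b.val
      · have : a = b := Fin.ext hab
        subst this
        simp [SimpleGraph.irrefl]
      · rcases lt_or_gt_of_ne hab with hlt | hgt
        · have hk := key a b (by omega) (by omega)
          rw [star a, star b] at hk
          tauto
        · have hk := key b a (by omega) (by omega)
          rw [star a, star b] at hk
          rw [G.adj_comm, H.adj_comm]
          tauto

/-- A connected-intersecting family of graphs on `[n]` has size at most
`2 ^ (C(n,2) - (n-1))`. -/
theorem stmt_3 (n : ℕ) (hn : 1 ≤ n) (F : Set (SimpleGraph (Fin n)))
    (h : ∀ G ∈ F, ∀ H ∈ F, (G ⊓ H).Connected) :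
    F.ncard ≤ 2 ^ (n.choose 2 - (n - 1)) := by
  classical
  obtain ⟨m, rfl⟩ : ∃ m, n = m + 1 := ⟨n - 1, by omega⟩
  have hinj : Function.Injective (fun G : F => psiAux m G.val) := by
    intro G H hGH
    exact Subtype.ext (psiAux_inj m G.val H.val (h _ G.2 _ H.2) hGH)
  have hcard : F.ncard ≤ Nat.card ((Σ i : Fin m, Fin i.val) → Prop) := by
    rw [← Nat.card_coe_set_eq]
    exact Nat.card_le_card_of_injective _ hinj
  have hI : Fintype.card (Σ i : Fin m, Fin i.val) = m.choose 2 := by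
    rw [Fintype.card_sigma]
    simp only [Fintype.card_fin]
    rw [show (∑ x : Fin m, (x : ℕ)) = ∑ i ∈ Finset.range m, i from
      Fin.sum_univ_eq_sum_range (fun i => i) m, Finset.sum_range_id, Nat.choose_two_right]
  have htgt : Nat.card ((Σ i : Fin m, Fin i.val) → Prop) = 2 ^ m.choose 2 := by
    rw [Nat.card_eq_fintype_card, Fintype.card_fun, Fintype.card_prop, hI]
  have hexp : m.choose 2 = (m + 1).choose 2 - (m + 1 - 1) := by
    have h1 : (m + 1).choose 2 = m.choose 1 + m.choose 2 := Nat.choose_succ_succ m 1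
    simp [Nat.choose_one_right] at h1
    omega
  rw [← hexp]
  omega
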